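/- Assume the pair (A,A') is good. Then the bilinear form induced by ⟨·,·⟩ on [A,A'] is nondegenerate (so [A,A'] is a symplectic vector space of dimension 2n − 2t). -/

import Mathlib

open Module Submodule

variable {k V : Type*} [Field k] [AddCommGroup V] [Module k V]

/-- The orthogonal `A^⊥ = {x ∈ V : ⟨x,a⟩ = 0 ∀ a ∈ A}` of a subspace `A` of `V` with
respect to a bilinear form `B` on `V`. -/
def perp (B : V →ₗ[k] V →ₗ[k] k) (A : Submodule k V) : Submodule k V where
  carrier := {x | ∀ a ∈ A, B x a = 0}
  add_mem' := fun {x y} hx hy a ha => by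
    simp [map_add, LinearMap.add_apply, hx a ha, hy a ha]
  zero_mem' := fun a ha => by simp
  smul_mem' := fun c x hx a ha => by
    simp [map_smul, LinearMap.smul_apply, hx a ha]

/-- The pair `(A,A')` of isotropic subspaces is *good* if there is a subspace `L` with
`A^⊥ = L ⊕ A` and `A'^⊥ = L ⊕ A'` (internal direct sums). -/
def IsGood (B : V →ₗ[k] V →ₗ[k] k) (A A' : Submodule k V) : Prop :=
  ∃ L : Submodule k V,
    (Disjoint L A ∧ L ⊔ A = perp B A) ∧ (Disjoint L A' ∧ L ⊔ A' = perp B A')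

/-- Let `V` be a `2n`-dimensional symplectic vector space over `k` and let
`A, A'` be `t`-dimensional isotropic subspaces with `(A,A')` good.  Then the bilinear form
induced by `⟨·,·⟩` on `[A,A'] = (A^⊥ ∩ A'^⊥)/(A ∩ A')` is nondegenerate (expressed on
representatives: any `x ∈ A^⊥ ∩ A'^⊥` pairing to `0` with all of `A^⊥ ∩ A'^⊥` lies in
`A ∩ A'`), so `[A,A']` is a symplectic vector space of dimension `2n - 2t`. -/
theorem stmt6 [FiniteDimensional k V] (n t : ℕ) (hn : 1 ≤ n) (htn : t ≤ n)
    (B : V →ₗ[k] V →ₗ[k] k)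
    (hdim : finrank k V = 2 * n)
    (halt : ∀ x : V, B x x = 0)
    (hnd : ∀ x : V, (∀ y : V, B x y = 0) → x = 0)
    (A A' : Submodule k V)
    (hA : A ≤ perp B A) (hA' : A' ≤ perp B A')
    (hdA : finrank k A = t) (hdA' : finrank k A' = t)
    (hgood : IsGood B A A') :
    (∀ x ∈ perp B A ⊓ perp B A',
      (∀ y ∈ perp B A ⊓ perp B A', B x y = 0) → x ∈ A ⊓ A') ∧
    finrank k (↥(perp B A ⊓ perp B A') ⧸ (A ⊓ A').comap (perp B A ⊓ perp B A').subtype)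
      = 2 * n - 2 * t := by
  obtain ⟨L, ⟨hLA, hLAsup⟩, hLA', hLA'sup⟩ := hgood
  have halt' : LinearMap.BilinForm.IsAlt B := halt
  have hrefl : LinearMap.IsRefl B := halt'.isRefl
  have hndg : LinearMap.BilinForm.Nondegenerate B :=
    hrefl.nondegenerate_iff_separatingLeft.mpr hnd
  -- `perp` agrees with mathlib's `orthogonal`
  have hperp : ∀ U : Submodule k V, perp B U = LinearMap.BilinForm.orthogonal B U := by
    intro U
    ext x
    exact ⟨fun h a ha => hrefl _ _ (h a ha), fun h a ha => hrefl _ _ (h a ha)⟩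
  set W : Submodule k V := perp B A ⊓ perp B A' with hWdef
  have hWorth : W = LinearMap.BilinForm.orthogonal B (A ⊔ A') := by
    ext x
    simp only [hWdef, Submodule.mem_inf, hperp, LinearMap.BilinForm.mem_orthogonal_iff]
    constructor
    · rintro ⟨h1, h2⟩ y hy
      rcases Submodule.mem_sup.mp hy with ⟨a, ha, b, hb, rfl⟩
      show B (a + b) x = 0
      rw [map_add, LinearMap.add_apply, h1 a ha, h2 b hb, add_zero]
    · intro h
      exact ⟨fun a ha => h a (Submodule.mem_sup_left ha),
        fun b hb => h b (Submodule.mem_sup_right hb)⟩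
  -- membership facts
  have hAAW : A ⊓ A' ≤ W :=
    le_inf (inf_le_left.trans hA) (inf_le_right.trans hA')
  have hLW : L ≤ W :=
    le_inf (le_sup_left.trans hLAsup.le) (le_sup_left.trans hLA'sup.le)
  -- dimension bookkeeping
  have hdWeq : finrank k W = 2 * n - finrank k ↥(A ⊔ A') := by
    rw [hWorth, LinearMap.BilinForm.finrank_orthogonal hndg, hdim]
  have hsupinf : finrank k ↥(A ⊔ A') + finrank k ↥(A ⊓ A') = t + t := by
    rw [Submodule.finrank_sup_add_finrank_inf_eq, hdA, hdA']
  have hAAle : finrank k ↥(A ⊓ A') ≤ t := hdA ▸ Submodule.finrank_mono inf_le_left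
  have hsuple : finrank k ↥(A ⊔ A') ≤ 2 * n := hdim ▸ Submodule.finrank_le _
  have hdL : finrank k L + t = 2 * n - t := by
    have h1 : finrank k ↥(L ⊔ A) + finrank k ↥(L ⊓ A) = finrank k L + finrank k A :=
      Submodule.finrank_sup_add_finrank_inf_eq L A
    rw [hLAsup, hLA.eq_bot, finrank_bot, add_zero, hdA] at h1
    rw [← h1, hperp, LinearMap.BilinForm.finrank_orthogonal hndg, hdim, hdA]
  have hWdim : finrank k W = finrank k L + finrank k ↥(A ⊓ A') := by
    have : t ≤ 2 * n := le_trans htn (by omega)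
    omega
  -- W = L ⊕ (A ⊓ A')
  have hdisjLAA : Disjoint L (A ⊓ A') := hLA.mono_right inf_le_left
  have hWeq : L ⊔ (A ⊓ A') = W := by
    apply Submodule.eq_of_le_of_finrank_le (sup_le hLW hAAW)
    rw [hWdim, ← Submodule.finrank_sup_add_finrank_inf_eq, hdisjLAA.eq_bot, finrank_bot,
      add_zero]
  constructor
  · -- nondegeneracy
    intro x hx hxy
    obtain ⟨l, hl, c, hc, rfl⟩ := Submodule.mem_sup.mp (hWeq ▸ hx)
    -- `l` is orthogonal to all of `W`
    have hlorth : l ∈ LinearMap.BilinForm.orthogonal B W := by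
      intro y hy
      have h1 : B y (l + c) = 0 := hrefl _ _ (hxy y hy)
      have h2 : B y c = 0 := hy.1 c hc.1
      show B y l = 0
      have := h1
      rw [map_add, h2, add_zero] at this
      exact this
    rw [hWorth, LinearMap.BilinForm.orthogonal_orthogonal hndg hrefl] at hlorth
    obtain ⟨a, ha, a', ha', hsum⟩ := Submodule.mem_sup.mp hlorth
    -- `a ∈ W`
    have haW : a ∈ W := by
      refine ⟨hA ha, fun y hy => ?_⟩
      have h1 : B l y = 0 := (hLW hl).2 y hy
      have h2 : B a' y = 0 := hA' ha' y hy
      have : B (a + a') y = 0 := by rw [hsum]; exact h1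
      rw [map_add, LinearMap.add_apply, h2, add_zero] at this
      exact this
    obtain ⟨l₁, hl₁, c₁, hc₁, hsum₁⟩ := Submodule.mem_sup.mp (hWeq ▸ haW)
    have hl₁A : l₁ ∈ A := by
      have : l₁ = a - c₁ := by rw [← hsum₁]; abel
      rw [this]; exact Submodule.sub_mem _ ha hc₁.1
    have hl₁0 : l₁ = 0 := Submodule.disjoint_def.mp hLA l₁ hl₁ hl₁A
    have haA' : a ∈ A' := by
      have : a = c₁ := by rw [← hsum₁, hl₁0, zero_add]
      rw [this]; exact hc₁.2
    have hlA' : l ∈ A' := by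
      rw [← hsum]; exact Submodule.add_mem _ haA' ha'
    have hl0 : l = 0 := Submodule.disjoint_def.mp hLA' l hl hlA'
    rw [hl0, zero_add]
    exact hc
  · -- the dimension computation
    have hq := Submodule.finrank_quotient_add_finrank ((A ⊓ A').comap W.subtype)
    have hc : finrank k ((A ⊓ A').comap W.subtype) = finrank k ↥(A ⊓ A') :=
      LinearEquiv.finrank_eq (Submodule.comapSubtypeEquivOfLe hAAW)
    rw [hc] at hq
    have : t ≤ 2 * n := le_trans htn (by omega)
    omega
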